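/- Let W be an integrable random variable with continuous strictly increasing CDF F. Then the function h(w') = w' + (1/α)·E[min(W − w', 0)] is maximized exactly at w* = F⁻¹(α), i.e., the argmax of the Rockafellar–Uryasev auxiliary function is the α-quantile (VaR) of W. -/

import Mathlib

open MeasureTheory

private lemma ru_min_integrable {Ω : Type*} [MeasurableSpace Ω] (μ : Measure Ω)
    [IsProbabilityMeasure μ] (W : Ω → ℝ) (hW : Integrable W μ) (c : ℝ) :
    Integrable (fun ω => min (W ω - c) 0) μ :=
  (hW.sub (integrable_const c)).inf (integrable_const 0)

private lemma ru_ind {Ω : Type*} [MeasurableSpace Ω] (μ : Measure Ω) [IsProbabilityMeasure μ]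
    (W : Ω → ℝ) (hW : Integrable W μ) (c : ℝ) :
    Integrable (Set.indicator {ω | W ω ≤ c} (fun _ => (1:ℝ))) μ ∧
    ∫ ω, Set.indicator {ω | W ω ≤ c} (fun _ => (1:ℝ)) ω ∂μ = (μ {ω | W ω ≤ c}).toReal := by
  obtain ⟨t, htm, hts⟩ : NullMeasurableSet {ω | W ω ≤ c} μ :=
    nullMeasurableSet_le hW.aemeasurable aemeasurable_const
  have heq : Set.indicator {ω | W ω ≤ c} (fun _ => (1:ℝ)) =ᵐ[μ]
      Set.indicator t (fun _ => (1:ℝ)) := indicator_ae_eq_of_ae_eq_set hts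
  refine ⟨((integrable_const (1:ℝ)).indicator htm).congr heq.symm, ?_⟩
  rw [integral_congr_ae heq, integral_indicator_const (1:ℝ) htm, measure_congr hts]
  simp; rfl

/-- Key sandwich: for `a ≤ b`,
`-(b-a)·F(b) ≤ g(b) - g(a) ≤ -(b-a)·F(a)` where `g(c) = ∫ min (W - c) 0`. -/
private lemma ru_sandwich {Ω : Type*} [MeasurableSpace Ω] (μ : Measure Ω)
    [IsProbabilityMeasure μ] (W : Ω → ℝ) (hW : Integrable W μ) (a b : ℝ) (hab : a ≤ b) :
    -(b - a) * (μ {ω | W ω ≤ b}).toReal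
        ≤ (∫ ω, min (W ω - b) 0 ∂μ) - ∫ ω, min (W ω - a) 0 ∂μ ∧
    (∫ ω, min (W ω - b) 0 ∂μ) - ∫ ω, min (W ω - a) 0 ∂μ
        ≤ -(b - a) * (μ {ω | W ω ≤ a}).toReal := by
  obtain ⟨hbi, hbe⟩ := ru_ind μ W hW b
  obtain ⟨hai, hae⟩ := ru_ind μ W hW a
  have hga := ru_min_integrable μ W hW a
  have hgb := ru_min_integrable μ W hW b
  have hsub : (∫ ω, min (W ω - b) 0 ∂μ) - (∫ ω, min (W ω - a) 0 ∂μ)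
      = ∫ ω, (min (W ω - b) 0 - min (W ω - a) 0) ∂μ := (integral_sub hgb hga).symm
  constructor
  · have hpt : ∀ ω, -(b - a) * Set.indicator {ω | W ω ≤ b} (fun _ => (1:ℝ)) ω
        ≤ min (W ω - b) 0 - min (W ω - a) 0 := by
      intro ω
      rcases le_or_gt (W ω) b with h | h
      · rw [Set.indicator_apply, if_pos (by exact h)]
        have h1 : min (W ω - b) 0 = W ω - b := min_eq_left (by linarith)
        have h2 : min (W ω - a) 0 ≤ W ω - a := min_le_left _ _
        linarith
      · rw [Set.indicator_apply, if_neg (by exact h.not_ge)]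
        have h1 : min (W ω - b) 0 = 0 := min_eq_right (by linarith)
        have h2 : min (W ω - a) 0 = 0 := min_eq_right (by linarith)
        rw [h1, h2, mul_zero, sub_self]
    calc -(b - a) * (μ {ω | W ω ≤ b}).toReal
        = ∫ ω, -(b - a) * Set.indicator {ω | W ω ≤ b} (fun _ => (1:ℝ)) ω ∂μ := by
          rw [integral_const_mul, hbe]
      _ ≤ ∫ ω, (min (W ω - b) 0 - min (W ω - a) 0) ∂μ :=
          integral_mono (hbi.const_mul _) (hgb.sub hga) hpt
      _ = _ := hsub.symm
  · have hpt : ∀ ω, min (W ω - b) 0 - min (W ω - a) 0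
        ≤ -(b - a) * Set.indicator {ω | W ω ≤ a} (fun _ => (1:ℝ)) ω := by
      intro ω
      rcases le_or_gt (W ω) a with h | h
      · rw [Set.indicator_apply, if_pos (by exact h)]
        have h1 : min (W ω - b) 0 = W ω - b := min_eq_left (by linarith)
        have h2 : min (W ω - a) 0 = W ω - a := min_eq_left (by linarith)
        rw [h1, h2]; ring_nf; exact le_rfl
      · rw [Set.indicator_apply, if_neg (by exact h.not_ge)]
        have h2 : min (W ω - b) 0 ≤ min (W ω - a) 0 :=
          min_le_min (by linarith) le_rfl
        rw [mul_zero]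
        linarith
    calc (∫ ω, min (W ω - b) 0 ∂μ) - ∫ ω, min (W ω - a) 0 ∂μ
        = ∫ ω, (min (W ω - b) 0 - min (W ω - a) 0) ∂μ := hsub
      _ ≤ ∫ ω, -(b - a) * Set.indicator {ω | W ω ≤ a} (fun _ => (1:ℝ)) ω ∂μ :=
          integral_mono (hgb.sub hga) (hai.const_mul _) hpt
      _ = -(b - a) * (μ {ω | W ω ≤ a}).toReal := by rw [integral_const_mul, hae]

theorem ru_argmax_is_VaR
    {Ω : Type*} [MeasurableSpace Ω] (μ : Measure Ω) [IsProbabilityMeasure μ]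
    (W : Ω → ℝ) (hW : Integrable W μ)
    (F : ℝ → ℝ) (hF : ∀ x, F x = (μ {ω | W ω ≤ x}).toReal)
    (hFcont : Continuous F) (hFmono : StrictMono F)
    (α : ℝ) (hα : α ∈ Set.Ioo (0 : ℝ) 1)
    (wstar : ℝ) (hq : F wstar = α) :
    (∀ w' : ℝ,
      w' + (1 / α) * ∫ ω, min (W ω - w') 0 ∂μ
        ≤ wstar + (1 / α) * ∫ ω, min (W ω - wstar) 0 ∂μ)
    ∧ (∀ w' : ℝ,
        (∀ v : ℝ, v + (1 / α) * ∫ ω, min (W ω - v) 0 ∂μ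
          ≤ w' + (1 / α) * ∫ ω, min (W ω - w') 0 ∂μ) → w' = wstar) := by
  obtain ⟨hα0, hα1⟩ := hα
  obtain ⟨h, hh⟩ : ∃ h : ℝ → ℝ, ∀ v, h v = v + (1 / α) * ∫ ω, min (W ω - v) 0 ∂μ :=
    ⟨_, fun v => rfl⟩
  -- sandwich for h
  have key : ∀ a b : ℝ, a ≤ b →
      (b - a) * (1 - F b / α) ≤ h b - h a ∧ h b - h a ≤ (b - a) * (1 - F a / α) := by
    intro a b hab
    obtain ⟨h1, h2⟩ := ru_sandwich μ W hW a b hab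
    rw [← hF b] at h1
    rw [← hF a] at h2
    have hd : h b - h a = (b - a) + (1 / α) *
        ((∫ ω, min (W ω - b) 0 ∂μ) - ∫ ω, min (W ω - a) 0 ∂μ) := by
      rw [hh a, hh b]; ring
    constructor
    · rw [hd]
      have := mul_le_mul_of_nonneg_left h1 (le_of_lt (by positivity : (0:ℝ) < 1/α))
      calc (b - a) * (1 - F b / α)
          = (b - a) + (1 / α) * (-(b - a) * F b) := by field_simp; ring
        _ ≤ _ := by linarith
    · rw [hd]
      have := mul_le_mul_of_nonneg_left h2 (le_of_lt (by positivity : (0:ℝ) < 1/α))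
      calc (b - a) + (1 / α) * ((∫ ω, min (W ω - b) 0 ∂μ) - ∫ ω, min (W ω - a) 0 ∂μ)
          ≤ (b - a) + (1 / α) * (-(b - a) * F a) := by linarith
        _ = (b - a) * (1 - F a / α) := by field_simp; ring
  have hmax : ∀ w', h w' ≤ h wstar := by
    intro w'
    rcases le_or_gt w' wstar with hle | hlt
    · have := (key w' wstar hle).1
      rw [hq] at this
      have hz : (wstar - w') * (1 - α / α) = 0 := by
        rw [div_self (ne_of_gt hα0)]; ring
      linarith [hz ▸ this]
    · have := (key wstar w' hlt.le).2
      rw [hq] at this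
      have hz : (w' - wstar) * (1 - α / α) = 0 := by
        rw [div_self (ne_of_gt hα0)]; ring
      linarith [hz ▸ this]
  constructor
  · intro w'
    rw [← hh w', ← hh wstar]
    exact hmax w'
  intro w' hw'
  by_contra hne
  have hws : h wstar ≤ h w' := by rw [hh wstar, hh w']; exact hw' wstar
  rcases lt_or_gt_of_ne hne with hlt | hgt
  · -- w' < wstar : pick midpoint m, h w' < h m ≤ h wstar
    set m := (w' + wstar) / 2 with hm
    have hm1 : w' < m := by simp [hm]; linarith
    have hm2 : m < wstar := by simp [hm]; linarith
    have hFm : F m < α := hq ▸ hFmono hm2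
    have k1 := (key w' m hm1.le).1
    have hpos : 0 < (m - w') * (1 - F m / α) := by
      apply mul_pos (by linarith)
      have : F m / α < 1 := (div_lt_one hα0).mpr hFm
      linarith
    have : h w' < h m := by linarith
    linarith [hmax m]
  · -- wstar < w'
    set m := (wstar + w') / 2 with hm
    have hm1 : wstar < m := by simp [hm]; linarith
    have hm2 : m < w' := by simp [hm]; linarith
    have hFm : α < F m := hq ▸ hFmono hm1
    have k2 := (key m w' hm2.le).2
    have hneg : (w' - m) * (1 - F m / α) < 0 := by
      apply mul_neg_of_pos_of_neg (by linarith)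
      have : 1 < F m / α := (one_lt_div hα0).mpr hFm
      linarith
    have : h w' < h m := by linarith
    linarith [hmax m]
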